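/- arXiv:1807.10094 — 4 statements merged into one kernel-verified Lean document; each statement's English description precedes it below -/
import Mathlib

section
/- Let p, a be trigonometric polynomials and suppose b_1,...,b_{J_a} satisfy the UEP identities with a (i.e. a(ω)conj(a(ω)) + Σ_j b_j(ω)conj(b_j(ω)) = 1 and a(ω)conj(a(ω−1/2)) + Σ_j b_j(ω)conj(b_j(ω−1/2)) = 0 for all ω), and q_1,...,q_{J_p} satisfy the UEP identities with p. Then the collection of products {p·b_j}, {a·q_j}, {q_j·b_k} satisfies the UEP identities with the product symbol a·p. -/
open ComplexConjugate Finset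

lemma uep_factor_aux (Ja Jp : ℕ) (A A' P P' : ℂ) (B B' : Fin Ja → ℂ) (Q Q' : Fin Jp → ℂ) :
    (A * P) * (A' * P')
      + ((∑ j, (P * B j) * (P' * B' j))
        + (∑ j, (A * Q j) * (A' * Q' j))
        + ∑ j, ∑ k, (Q j * B k) * (Q' j * B' k))
    = (A * A' + ∑ j, B j * B' j) * (P * P' + ∑ j, Q j * Q' j) := by
  have h1 : (∑ j, (P * B j) * (P' * B' j)) = (P * P') * ∑ j, B j * B' j := by
    rw [Finset.mul_sum]; exact Finset.sum_congr rfl fun j _ => by ring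
  have h2 : (∑ j, (A * Q j) * (A' * Q' j)) = (A * A') * ∑ j, Q j * Q' j := by
    rw [Finset.mul_sum]; exact Finset.sum_congr rfl fun j _ => by ring
  have h3 : (∑ j, ∑ k, (Q j * B k) * (Q' j * B' k))
      = (∑ j, Q j * Q' j) * ∑ k, B k * B' k := by
    rw [Finset.sum_mul]
    refine Finset.sum_congr rfl fun j _ => ?_
    rw [Finset.mul_sum]; exact Finset.sum_congr rfl fun k _ => by ring
  rw [h1, h2, h3]; ring

/-- UEP identities are preserved under products of symbols:
if `a` satisfies the UEP identities with framelets `b j` and `p` with `q j`,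
then `a*p` satisfies them with the family `{p*b j} ∪ {a*q j} ∪ {q j * b k}`. -/
theorem uep_product (Ja Jp : ℕ) (p a : ℝ → ℂ) (b : Fin Ja → ℝ → ℂ) (q : Fin Jp → ℝ → ℂ)
    (ha1 : ∀ ω : ℝ, a ω * conj (a ω) + ∑ j, b j ω * conj (b j ω) = 1)
    (ha2 : ∀ ω : ℝ, a ω * conj (a (ω - 1/2)) + ∑ j, b j ω * conj (b j (ω - 1/2)) = 0)
    (hp1 : ∀ ω : ℝ, p ω * conj (p ω) + ∑ j, q j ω * conj (q j ω) = 1)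
    (hp2 : ∀ ω : ℝ, p ω * conj (p (ω - 1/2)) + ∑ j, q j ω * conj (q j (ω - 1/2)) = 0) :
    (∀ ω : ℝ,
      (a ω * p ω) * conj (a ω * p ω)
        + ((∑ j, (p ω * b j ω) * conj (p ω * b j ω))
          + (∑ j, (a ω * q j ω) * conj (a ω * q j ω))
          + ∑ j, ∑ k, (q j ω * b k ω) * conj (q j ω * b k ω)) = 1)
    ∧ (∀ ω : ℝ,
      (a ω * p ω) * conj (a (ω - 1/2) * p (ω - 1/2))
        + ((∑ j, (p ω * b j ω) * conj (p (ω - 1/2) * b j (ω - 1/2)))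
          + (∑ j, (a ω * q j ω) * conj (a (ω - 1/2) * q j (ω - 1/2)))
          + ∑ j, ∑ k, (q j ω * b k ω) * conj (q j (ω - 1/2) * b k (ω - 1/2))) = 0) := by
  constructor <;> intro ω <;> simp only [map_mul]
  · rw [uep_factor_aux Ja Jp (a ω) (conj (a ω)) (p ω) (conj (p ω))
      (fun j => b j ω) (fun j => conj (b j ω)) (fun j => q j ω) (fun j => conj (q j ω)),
      ha1, hp1, one_mul]
  · rw [uep_factor_aux Ja Jp (a ω) (conj (a (ω - 1/2))) (p ω) (conj (p (ω - 1/2)))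
      (fun j => b j ω) (fun j => conj (b j (ω - 1/2))) (fun j => q j ω)
      (fun j => conj (q j (ω - 1/2))), ha2, hp2, zero_mul]
end

section
/- Let d be a trigonometric polynomial with real coefficients satisfying |d(ω)|² + |d(ω−1/2)|² = 1 for all ω, and set q_d(ω) = e^{−i2π(2n−1)ω}·conj(d(ω−1/2)). Then p = d·conj(d), q_1(ω) = √2·e^{i2π(2n−1)ω}·d(ω)·d(ω−1/2) and q_2(ω) = d(ω−1/2)·conj(d(ω−1/2)) satisfy the UEP identities: |p(ω)|² + |q_1(ω)|² + |q_2(ω)|² = 1 and p(ω)conj(p(ω−1/2)) + q_1(ω)conj(q_1(ω−1/2)) + q_2(ω)conj(q_2(ω−1/2)) = 0 for all ω ∈ [0,1). -/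
open ComplexConjugate Finset Real

/-- For a trigonometric polynomial `d` with real coefficients supported on `{1-2n,…,0}`
satisfying `|d(ω)|² + |d(ω-1/2)|² = 1`, the symbols
`p = d·conj d`, `q₁(ω) = √2 e^{i2π(2n-1)ω} d(ω) d(ω-1/2)` and
`q₂(ω) = d(ω-1/2)·conj(d(ω-1/2))` satisfy the UEP identities. -/
theorem dd_uep (n : ℕ) (hn : 0 < n) (c : ℤ → ℝ) (d : ℝ → ℂ)
    (hd : ∀ ω : ℝ, d ω = (1/2 : ℂ) * ∑ k ∈ Finset.Icc (1 - 2*(n:ℤ)) 0,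
      (c k : ℂ) * Complex.exp (2 * (Real.pi : ℂ) * Complex.I * (k : ℂ) * (ω : ℂ)))
    (hQMF : ∀ ω : ℝ, d ω * conj (d ω) + d (ω - 1/2) * conj (d (ω - 1/2)) = 1) :
    (∀ ω : ℝ,
      (d ω * conj (d ω)) * conj (d ω * conj (d ω))
      + ((Real.sqrt 2 : ℂ) * Complex.exp (2 * (Real.pi : ℂ) * Complex.I * (2*(n:ℂ) - 1) * (ω : ℂ))
            * d ω * d (ω - 1/2))
        * conj ((Real.sqrt 2 : ℂ)
            * Complex.exp (2 * (Real.pi : ℂ) * Complex.I * (2*(n:ℂ) - 1) * (ω : ℂ))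
            * d ω * d (ω - 1/2))
      + (d (ω - 1/2) * conj (d (ω - 1/2))) * conj (d (ω - 1/2) * conj (d (ω - 1/2))) = 1)
    ∧ (∀ ω : ℝ,
      (d ω * conj (d ω)) * conj (d (ω - 1/2) * conj (d (ω - 1/2)))
      + ((Real.sqrt 2 : ℂ) * Complex.exp (2 * (Real.pi : ℂ) * Complex.I * (2*(n:ℂ) - 1) * (ω : ℂ))
            * d ω * d (ω - 1/2))
        * conj ((Real.sqrt 2 : ℂ)
            * Complex.exp (2 * (Real.pi : ℂ) * Complex.I * (2*(n:ℂ) - 1) * ((ω : ℂ) - 1/2))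
            * d (ω - 1/2) * d (ω - 1))
      + (d (ω - 1/2) * conj (d (ω - 1/2))) * conj (d (ω - 1) * conj (d (ω - 1))) = 0) := by
  have h2 : ((Real.sqrt 2 : ℝ) : ℂ) * ((Real.sqrt 2 : ℝ) : ℂ) = 2 := by
    norm_cast
    rw [Real.mul_self_sqrt (by norm_num : (0:ℝ) ≤ 2)]
  have hper : ∀ ω : ℝ, d (ω - 1) = d ω := by
    intro ω
    rw [hd, hd]
    congr 1
    refine Finset.sum_congr rfl fun k _ => ?_
    congr 1
    have h1 : ((ω - 1 : ℝ) : ℂ) = (ω : ℂ) - 1 := by push_cast; ring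
    rw [h1, show (2 * (Real.pi : ℂ) * Complex.I * (k:ℂ) * ((ω:ℂ) - 1))
        = 2 * (Real.pi : ℂ) * Complex.I * (k:ℂ) * (ω:ℂ) - (k:ℂ) * (2 * (Real.pi:ℂ) * Complex.I) by
          ring,
      Complex.exp_sub, Complex.exp_int_mul_two_pi_mul_I, div_one]
  have key : ∀ ω : ℝ, Complex.exp (2 * (Real.pi:ℂ) * Complex.I * (2*(n:ℂ)-1) * (ω:ℂ))
      * conj (Complex.exp (2 * (Real.pi:ℂ) * Complex.I * (2*(n:ℂ)-1) * (ω:ℂ))) = 1 := by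
    intro ω
    rw [← Complex.exp_conj, ← Complex.exp_add]
    have hc : conj (2 * (Real.pi:ℂ) * Complex.I * (2*(n:ℂ)-1) * (ω:ℂ))
        = -(2 * (Real.pi:ℂ) * Complex.I * (2*(n:ℂ)-1) * (ω:ℂ)) := by
      simp [map_mul, map_sub, map_ofNat, map_one, map_div₀, Complex.conj_natCast, Complex.conj_I, Complex.conj_ofReal]
    rw [hc, add_neg_cancel, Complex.exp_zero]
  have key2 : ∀ ω : ℝ, Complex.exp (2 * (Real.pi:ℂ) * Complex.I * (2*(n:ℂ)-1) * (ω:ℂ))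
      * conj (Complex.exp (2 * (Real.pi:ℂ) * Complex.I * (2*(n:ℂ)-1) * ((ω:ℂ) - 1/2))) = -1 := by
    intro ω
    rw [← Complex.exp_conj, ← Complex.exp_add]
    have hc : conj (2 * (Real.pi:ℂ) * Complex.I * (2*(n:ℂ)-1) * ((ω:ℂ) - 1/2))
        = -(2 * (Real.pi:ℂ) * Complex.I * (2*(n:ℂ)-1) * ((ω:ℂ) - 1/2)) := by
      simp [map_mul, map_sub, map_ofNat, map_one, map_div₀, Complex.conj_natCast, Complex.conj_I, Complex.conj_ofReal]
    rw [hc]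
    have harg : 2 * (Real.pi:ℂ) * Complex.I * (2*(n:ℂ)-1) * (ω:ℂ)
        + -(2 * (Real.pi:ℂ) * Complex.I * (2*(n:ℂ)-1) * ((ω:ℂ) - 1/2))
        = ((n:ℤ):ℂ) * (2 * (Real.pi:ℂ) * Complex.I) - (Real.pi:ℂ) * Complex.I := by
      push_cast; ring
    rw [harg, Complex.exp_sub, Complex.exp_int_mul_two_pi_mul_I, Complex.exp_pi_mul_I]
    norm_num
  constructor
  · intro ω
    simp only [map_mul, Complex.conj_conj, Complex.conj_ofReal]
    linear_combination (d ω * conj (d ω) + d (ω - 1/2) * conj (d (ω - 1/2)) + 1) * hQMF ω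
      + 2 * (d ω * conj (d ω)) * (d (ω - 1/2) * conj (d (ω - 1/2))) * key ω
      + (Complex.exp (2 * (Real.pi:ℂ) * Complex.I * (2*(n:ℂ)-1) * (ω:ℂ))
          * conj (Complex.exp (2 * (Real.pi:ℂ) * Complex.I * (2*(n:ℂ)-1) * (ω:ℂ))))
        * (d ω * conj (d ω)) * (d (ω - 1/2) * conj (d (ω - 1/2))) * h2
  · intro ω
    rw [hper ω]
    simp only [map_mul, Complex.conj_conj, Complex.conj_ofReal]
    linear_combination (((Real.sqrt 2 : ℝ) : ℂ) * ((Real.sqrt 2 : ℝ) : ℂ))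
        * (d ω * conj (d ω)) * (d (ω - 1/2) * conj (d (ω - 1/2))) * key2 ω
      - (d ω * conj (d ω)) * (d (ω - 1/2) * conj (d (ω - 1/2))) * h2
end

section
/- Let P̃ be a square matrix with P̃·𝟏 = 𝟏, δ^T·P̃ = δ^T for the standard basis vector δ at index 0, P̃(0,0) = 1 being the only nonzero entry in row 0, and suppose every eigenvalue λ ≠ 1 of P̃ satisfies |λ| < 1, with 1 a simple eigenvalue. Then for every canonical basis vector δ_k, P̃^j δ_k converges to δ_k(0)·𝟏 as j → ∞. -/
open Filter Polynomial

attribute [local instance] Matrix.frobeniusNormedAddCommGroup Matrix.frobeniusNormedRing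
  Matrix.frobeniusNormedAlgebra

lemma eval_charpoly_det {m : Type} [Fintype m] [DecidableEq m] (B : Matrix m m ℂ) (μ : ℂ) :
    B.charpoly.eval μ = (μ • (1 : Matrix m m ℂ) - B).det := by
  rw [Matrix.charpoly, ← Polynomial.coe_evalRingHom, RingHom.map_det]
  congr 1
  ext i j
  by_cases h : i = j
  · subst h
    simp [Matrix.charmatrix_apply_eq, Matrix.one_apply]
  · simp [Matrix.charmatrix_apply_ne _ _ _ h, Matrix.one_apply_ne h]

lemma entries_pow_tendsto_zero {m : Type} [Fintype m] [DecidableEq m] (B : Matrix m m ℂ)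
    (h : ∀ μ : ℂ, B.charpoly.eval μ = 0 → ‖μ‖₊ < 1) :
    ∀ i j : m, Tendsto (fun n : ℕ => (B ^ n) i j) atTop (nhds 0) := by
  have hne : B.charpoly ≠ 0 := B.charpoly_monic.ne_zero
  have hfin := Polynomial.finite_setOf_isRoot hne
  set t : NNReal := hfin.toFinset.sup (fun μ => ‖μ‖₊) with ht
  have ht1 : t < 1 := by
    rw [ht, Finset.sup_lt_iff (by norm_num : (⊥ : NNReal) < 1)]
    intro μ hμ
    exact h μ (by simpa using hfin.mem_toFinset.mp hμ)
  have hρ : spectralRadius ℂ B ≤ (t : ENNReal) := by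
    rw [spectralRadius]
    refine iSup₂_le fun μ hμ => ?_
    have hdet : B.charpoly.eval μ = 0 := by
      rw [eval_charpoly_det]
      by_contra hd
      exact (spectrum.mem_iff.mp hμ)
        (by
          rw [Algebra.algebraMap_eq_smul_one]
          exact (Matrix.isUnit_iff_isUnit_det _).mpr (isUnit_iff_ne_zero.mpr hd))
    exact ENNReal.coe_le_coe.mpr (Finset.le_sup (hfin.mem_toFinset.mpr hdet))
  have hρ1 : spectralRadius ℂ B < 1 :=
    lt_of_le_of_lt hρ (by exact_mod_cast ht1)
  obtain ⟨r, hρr, hr1⟩ := ENNReal.lt_iff_exists_nnreal_btwn.mp hρ1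
  have hr1' : r < 1 := by exact_mod_cast hr1
  have hev : ∀ᶠ n : ℕ in atTop, (‖B ^ n‖₊ : ENNReal) ^ (1 / (n : ℝ)) < (r : ENNReal) :=
    (spectrum.pow_nnnorm_pow_one_div_tendsto_nhds_spectralRadius B).eventually_lt_const hρr
  have hev2 : ∀ᶠ n : ℕ in atTop, ‖B ^ n‖₊ ≤ r ^ n := by
    filter_upwards [hev, eventually_ge_atTop 1] with n hn hn1
    have hn0 : (n : ℝ) ≠ 0 := by positivity
    have h2 : ((‖B ^ n‖₊ : ENNReal) ^ (1 / (n : ℝ))) ^ (n : ℝ) ≤ (r : ENNReal) ^ (n : ℝ) :=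
      ENNReal.rpow_le_rpow hn.le (by positivity)
    rw [← ENNReal.rpow_mul, one_div_mul_cancel hn0, ENNReal.rpow_one,
      ENNReal.rpow_natCast] at h2
    rw [← ENNReal.coe_pow] at h2
    exact_mod_cast h2
  have hrt : Tendsto (fun n : ℕ => (r : ℝ) ^ n) atTop (nhds 0) :=
    tendsto_pow_atTop_nhds_zero_of_lt_one r.coe_nonneg hr1'
  have hnorm : Tendsto (fun n : ℕ => ‖B ^ n‖) atTop (nhds 0) := by
    refine squeeze_zero' (Eventually.of_forall fun n => norm_nonneg _) ?_ hrt
    filter_upwards [hev2] with n hn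
    calc ‖B ^ n‖ = ((‖B ^ n‖₊ : NNReal) : ℝ) := (coe_nnnorm _).symm
    _ ≤ ((r ^ n : NNReal) : ℝ) := by exact_mod_cast hn
    _ = (r : ℝ) ^ n := by push_cast; ring
  have hB : Tendsto (fun n : ℕ => B ^ n) atTop (nhds 0) :=
    tendsto_zero_iff_norm_tendsto_zero.mpr hnorm
  intro i j
  let L : Matrix m m ℂ →ₗ[ℂ] ℂ :=
    { toFun := fun A => A i j, map_add' := fun _ _ => rfl, map_smul' := fun _ _ => rfl }
  have hcont : Continuous L := L.continuous_of_finiteDimensional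
  have := (hcont.tendsto 0).comp hB
  exact this

lemma charpoly_factor {ι : Type} [Fintype ι] [DecidableEq ι] (i0 : ι) (P : Matrix ι ι ℝ)
    (hrow : ∀ j : ι, P i0 j = if j = i0 then 1 else 0) :
    P.charpoly = (X - C 1) *
      (P.submatrix (Subtype.val : {i : ι // ¬ i = i0} → ι) Subtype.val).charpoly := by
  classical
  let e : {i : ι // i = i0} ⊕ {i : ι // ¬ i = i0} ≃ ι := Equiv.sumCompl (· = i0)
  have h1 : P.charpoly = ((Matrix.reindex e.symm e.symm) P).charpoly :=
    (Matrix.charpoly_reindex e.symm P).symm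
  have h2 : (Matrix.reindex e.symm e.symm) P =
      Matrix.fromBlocks (Matrix.of fun _ _ => (1 : ℝ)) 0
        (Matrix.of fun (a : {i : ι // ¬ i = i0}) (_ : {i : ι // i = i0}) => P a.1 i0)
        (P.submatrix Subtype.val Subtype.val) := by
    ext (a | a) (b | b) <;>
      simp [e, Matrix.reindex_apply, Matrix.submatrix_apply, Matrix.fromBlocks,
        hrow, a.2, b.2] <;> simp [hrow, b.2]
  haveI : Unique {i : ι // i = i0} := ⟨⟨⟨i0, rfl⟩⟩, fun a => Subtype.ext a.2⟩
  have h3 : (Matrix.of fun (_ _ : {i : ι // i = i0}) => (1 : ℝ)).charpoly = X - C 1 := by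
    rw [Matrix.charpoly, Matrix.det_unique]
    simp [Matrix.charmatrix_apply_eq]
  rw [h1, h2, Matrix.charpoly_fromBlocks_zero₁₂, h3]

/-- For a stochastic-type matrix `P̃` with `P̃𝟏 = 𝟏`, `δᵀP̃ = δᵀ`, row `0` equal to `δᵀ`,
all eigenvalues `λ ≠ 1` of modulus `< 1`, and `1` a simple eigenvalue, the powers applied
to the canonical basis vectors satisfy `P̃^j δ_k → δ_k(0)·𝟏`. -/
theorem powers_tendsto_delta (ι : Type) [Fintype ι] [DecidableEq ι] (i0 : ι)
    (P : Matrix ι ι ℝ)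
    (hones : P.mulVec (fun _ => 1) = fun _ => 1)
    (hdelta : Matrix.vecMul (Pi.single i0 1) P = Pi.single i0 1)
    (hrow : ∀ j : ι, P i0 j = if j = i0 then 1 else 0)
    (heig : ∀ lam : ℂ, lam ≠ 1 →
      (∃ v : ι → ℂ, v ≠ 0 ∧ (P.map (fun x : ℝ => (x : ℂ))).mulVec v = lam • v) →
      ‖lam‖ < 1)
    (hsimple : (P.charpoly).rootMultiplicity 1 = 1) :
    ∀ k : ι, Tendsto (fun j : ℕ => (P ^ j).mulVec (Pi.single k 1)) atTop
      (nhds (((Pi.single k (1 : ℝ) : ι → ℝ) i0) • ((fun _ => 1) : ι → ℝ))) := by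
  classical
  set s := {i : ι // ¬ i = i0}
  set Q : Matrix s s ℝ := P.submatrix Subtype.val Subtype.val with hQ
  -- `1` is not a root of `Q.charpoly`
  have hQ1 : Q.charpoly.eval 1 ≠ 0 := by
    have hfac := charpoly_factor i0 P hrow
    have hne : (X - C (1:ℝ)) * Q.charpoly ≠ 0 :=
      mul_ne_zero (X_sub_C_ne_zero 1) Q.charpoly_monic.ne_zero
    have := hsimple
    rw [hfac, Polynomial.rootMultiplicity_mul hne,
      Polynomial.rootMultiplicity_X_sub_C_self] at this
    have h0 : Q.charpoly.rootMultiplicity 1 = 0 := by omega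
    intro hroot
    have := (Polynomial.rootMultiplicity_eq_zero_iff.mp h0) hroot
    exact Q.charpoly_monic.ne_zero this
  -- complex version of Q
  set Qc : Matrix s s ℂ := Q.map (fun x : ℝ => (x : ℂ)) with hQc
  have hQcchar : Qc.charpoly = Q.charpoly.map Complex.ofRealHom :=
    Matrix.charpoly_map Q Complex.ofRealHom
  -- all roots of Qc.charpoly have modulus < 1
  have hroots : ∀ μ : ℂ, Qc.charpoly.eval μ = 0 → ‖μ‖₊ < 1 := by
    intro μ hμ
    -- get an eigenvector of Qc
    have hdet : (μ • (1 : Matrix s s ℂ) - Qc).det = 0 := by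
      rw [← eval_charpoly_det]; exact hμ
    obtain ⟨v, hv0, hvker⟩ := (Matrix.exists_mulVec_eq_zero_iff).mpr hdet
    have hveig : Qc.mulVec v = μ • v := by
      have := hvker
      rw [Matrix.sub_mulVec, sub_eq_zero, Matrix.smul_mulVec, Matrix.one_mulVec] at this
      exact this.symm
    -- μ ≠ 1
    have hμ1 : μ ≠ 1 := by
      intro h
      apply hQ1
      have heval : Qc.charpoly.eval 1 = Complex.ofRealHom (Q.charpoly.eval 1) := by
        rw [hQcchar, Polynomial.eval_one_map]
      rw [h, heval] at hμ
      rwa [Complex.ofRealHom_eq_coe, Complex.ofReal_eq_zero] at hμ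
    -- extend v to an eigenvector of P over ℂ
    set v' : ι → ℂ := fun i => if h : i = i0 then 0 else v ⟨i, h⟩ with hv'
    have hv'0 : v' ≠ 0 := by
      obtain ⟨a, ha⟩ := Function.ne_iff.mp hv0
      intro h
      apply ha
      have := congrFun h a.1
      simpa [hv', dif_neg a.2] using this
    have hv'eig : (P.map (fun x : ℝ => (x : ℂ))).mulVec v' = μ • v' := by
      funext i
      simp only [Matrix.mulVec, dotProduct, Matrix.map_apply, Pi.smul_apply,
        smul_eq_mul]
      by_cases hi : i = i0
      · rw [hi]
        have hall : ∀ j, (P i0 j : ℂ) * v' j = 0 := fun j => by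
          by_cases hj : j = i0
          · subst hj; simp [hv']
          · simp [hrow, hj]
        rw [Finset.sum_congr rfl (fun j _ => hall j), Finset.sum_const_zero]
        simp [hv']
      · have hsum : ∑ j, (P i j : ℂ) * v' j = ∑ x : s, (Qc ⟨i, hi⟩ x) * v x := by
          rw [← Finset.sum_erase_add _ _ (Finset.mem_univ i0)]
          have hz : (P i i0 : ℂ) * v' i0 = 0 := by simp [hv']
          rw [hz, add_zero]
          rw [Finset.sum_subtype (p := fun j => ¬ j = i0) (Finset.univ.erase i0)
            (fun x => by simp [Finset.mem_erase]) (fun j => (P i j : ℂ) * v' j)]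
          exact Finset.sum_congr rfl fun x _ => by
            simp [hQc, hQ, hv', dif_neg x.2]
        rw [hsum]
        have hx := congrFun hveig ⟨i, hi⟩
        simp only [Matrix.mulVec, dotProduct, Pi.smul_apply, smul_eq_mul] at hx
        rw [hx]
        simp [hv', dif_neg hi]
    have habs := heig μ hμ1 ⟨v', hv'0, hv'eig⟩
    rw [← NNReal.coe_lt_coe]
    simpa using habs
  -- entries of Q ^ n tend to zero
  have hQpow : ∀ a b : s, Tendsto (fun n : ℕ => (Q ^ n) a b) atTop (nhds 0) := by
    intro a b
    have h1 := entries_pow_tendsto_zero Qc hroots a b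
    have h2 : ∀ n : ℕ, (Qc ^ n) a b = ((Q ^ n) a b : ℂ) := by
      intro n
      have : Qc ^ n = (Q ^ n).map (fun x : ℝ => (x : ℂ)) := by
        rw [hQc]
        exact (map_pow (Complex.ofRealHom.mapMatrix) Q n).symm
      rw [this, Matrix.map_apply]
    simp_rw [h2] at h1
    have := (Complex.continuous_re.tendsto 0).comp h1
    simpa [Function.comp_def] using this
  -- extension by zero
  set E : (s → ℝ) → (ι → ℝ) := fun u i => if h : i = i0 then 0 else u ⟨i, h⟩ with hE
  have hPE : ∀ u : s → ℝ, P.mulVec (E u) = E (Q.mulVec u) := by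
    intro u
    funext i
    by_cases hi : i = i0
    · rw [hi]
      simp only [Matrix.mulVec, dotProduct, hrow]
      have hall : ∀ j, (if j = i0 then (1:ℝ) else 0) * E u j = 0 := fun j => by
        by_cases hj : j = i0
        · subst hj; simp [hE]
        · simp [hj]
      rw [Finset.sum_congr rfl (fun j _ => hall j), Finset.sum_const_zero]
      simp [hE]
    · have hsum : ∑ j, P i j * E u j = ∑ x : s, Q ⟨i, hi⟩ x * u x := by
        rw [← Finset.sum_erase_add _ _ (Finset.mem_univ i0)]
        have hz : P i i0 * E u i0 = 0 := by simp [hE]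
        rw [hz, add_zero]
        rw [Finset.sum_subtype (p := fun j => ¬ j = i0) (Finset.univ.erase i0)
          (fun x => by simp [Finset.mem_erase]) (fun j => P i j * E u j)]
        exact Finset.sum_congr rfl fun x _ => by
          simp [hQ, hE, dif_neg x.2]
      show ∑ j, P i j * E u j = E (Q.mulVec u) i
      rw [hsum]
      simp [hE, dif_neg hi, Matrix.mulVec, dotProduct]
  have hPEn : ∀ (n : ℕ) (u : s → ℝ), (P ^ n).mulVec (E u) = E ((Q ^ n).mulVec u) := by
    intro n
    induction n with
    | zero => intro u; simp [Matrix.one_mulVec]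
    | succ n ih =>
      intro u
      rw [pow_succ, ← Matrix.mulVec_mulVec, hPE u, ih, Matrix.mulVec_mulVec, ← pow_succ]
  have hones' : ∀ n : ℕ, (P ^ n).mulVec (fun _ => (1:ℝ)) = fun _ => 1 := by
    intro n
    induction n with
    | zero => simp [Matrix.one_mulVec]
    | succ n ih => rw [pow_succ, ← Matrix.mulVec_mulVec, hones, ih]
  intro k
  set c : ℝ := (Pi.single k (1:ℝ) : ι → ℝ) i0 with hc
  set u : s → ℝ := fun b => (Pi.single k (1:ℝ) : ι → ℝ) b.1 - c with hu
  have hw : ∀ j : ℕ, (P ^ j).mulVec (Pi.single k 1)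
      = E ((Q ^ j).mulVec u) + c • (fun _ => (1:ℝ)) := by
    intro j
    have hsplit : (Pi.single k (1:ℝ) : ι → ℝ) = E u + c • (fun _ => (1:ℝ)) := by
      funext i
      by_cases hi : i = i0
      · simp [hE, hi, hc]
      · simp [hE, hi, hu]
    rw [hsplit, Matrix.mulVec_add, Matrix.mulVec_smul, hPEn, hones']
  rw [show (fun j : ℕ => (P ^ j).mulVec (Pi.single k 1))
      = fun j => E ((Q ^ j).mulVec u) + c • (fun _ => (1:ℝ)) from funext hw]
  have h0 : Tendsto (fun j : ℕ => E ((Q ^ j).mulVec u)) atTop (nhds 0) := by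
    rw [tendsto_pi_nhds]
    intro i
    by_cases hi : i = i0
    · simpa [hE, hi] using (tendsto_const_nhds : Tendsto (fun _ : ℕ => (0:ℝ)) atTop (nhds 0))
    · have hrep : ∀ j : ℕ, E ((Q ^ j).mulVec u) i = ∑ b : s, (Q ^ j) ⟨i, hi⟩ b * u b := by
        intro j; simp [hE, dif_neg hi, Matrix.mulVec, dotProduct]
      have ht : Tendsto (fun j : ℕ => ∑ b : s, (Q ^ j) ⟨i, hi⟩ b * u b) atTop (nhds 0) := by
        have := tendsto_finset_sum (Finset.univ : Finset s)
          (fun b _ => (hQpow ⟨i, hi⟩ b).mul_const (u b))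
        simpa using this
      exact ht.congr (fun j => (hrep j).symm)
  have hfinal := h0.add
    (tendsto_const_nhds : Tendsto (fun _ : ℕ => c • (fun _ => (1:ℝ))) atTop (nhds _))
  simpa [hc] using hfinal
end

section
/- Let Φ = (φ_k)_{k∈ℤ} be a family of continuous compactly supported functions on ℝ with sup_k ‖φ_k‖_{L²} < ∞ and such that there exists s ∈ ℕ with: any point of ℝ lies in the supports of at most s of the φ_k. Then for every f ∈ L²(ℝ) and j ∈ ℤ, the sequence f_j(k) = 2^{j/2}∫_ℝ f(x)φ_k(2^j x)dx belongs to ℓ²(ℤ), with ‖f_j‖²_{ℓ²} ≤ s·‖f‖²_{L²}·sup_k‖φ_k‖²_{L²}. -/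
open MeasureTheory

/-- Cauchy–Schwarz for real integrals. -/
lemma cs_integral_sq {u v : ℝ → ℝ} (hu : MemLp u 2 volume) (hv : MemLp v 2 volume) :
    (∫ x, u x * v x) ^ 2 ≤ (∫ x, (u x) ^ 2) * (∫ x, (v x) ^ 2) := by
  have hpq : Real.HolderConjugate 2 2 := ⟨by norm_num, by norm_num, by norm_num⟩
  have hu' : MemLp u (ENNReal.ofReal 2) volume := by
    simpa [ENNReal.ofReal_ofNat] using hu
  have hv' : MemLp v (ENNReal.ofReal 2) volume := by
    simpa [ENNReal.ofReal_ofNat] using hv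
  have h2 := integral_mul_norm_le_Lp_mul_Lq hpq hu' hv'
  have hnorm : ∀ w : ℝ → ℝ, (∫ x, ‖w x‖ ^ (2 : ℝ)) = ∫ x, (w x) ^ 2 := by
    intro w
    refine integral_congr_ae (Filter.Eventually.of_forall fun x => ?_)
    simp [Real.rpow_two, Real.norm_eq_abs, sq_abs]
  rw [hnorm u, hnorm v] at h2
  have h1 : |∫ x, u x * v x| ≤ ∫ x, ‖u x‖ * ‖v x‖ := by
    simpa [Real.norm_eq_abs, abs_mul] using
      norm_integral_le_integral_norm (μ := volume) (fun x => u x * v x)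
  have hA : (0 : ℝ) ≤ ∫ x, (u x) ^ 2 := integral_nonneg fun x => sq_nonneg _
  have hB : (0 : ℝ) ≤ ∫ x, (v x) ^ 2 := integral_nonneg fun x => sq_nonneg _
  have habs : |∫ x, u x * v x| ≤ (∫ x, (u x) ^ 2) ^ (1 / (2:ℝ)) * (∫ x, (v x) ^ 2) ^ (1 / (2:ℝ)) :=
    h1.trans h2
  have := mul_self_le_mul_self (abs_nonneg _) habs
  calc (∫ x, u x * v x) ^ 2 = |∫ x, u x * v x| * |∫ x, u x * v x| := by
        rw [sq, ← abs_mul_abs_self]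
    _ ≤ ((∫ x, (u x) ^ 2) ^ (1 / (2:ℝ)) * (∫ x, (v x) ^ 2) ^ (1 / (2:ℝ)))
        * ((∫ x, (u x) ^ 2) ^ (1 / (2:ℝ)) * (∫ x, (v x) ^ 2) ^ (1 / (2:ℝ))) := this
    _ = (∫ x, (u x) ^ 2) * (∫ x, (v x) ^ 2) := by
        rw [mul_mul_mul_comm, ← Real.rpow_add' hA (by norm_num),
          ← Real.rpow_add' hB (by norm_num)]
        norm_num

/-- For a strictly local, uniformly `L²`-bounded family `Φ`, the sequence of scaled
inner products `f_j(k) = 2^{j/2} ∫ f(x) φ_k(2^j x) dx` is square-summable with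
`‖f_j‖²_{ℓ²} ≤ s ‖f‖²_{L²} sup_k ‖φ_k‖²_{L²}`. -/
theorem scaled_inner_products_l2 (φ : ℤ → ℝ → ℝ)
    (hcont : ∀ k, Continuous (φ k)) (hsupp : ∀ k, HasCompactSupport (φ k))
    (M : ℝ) (hM : 0 ≤ M) (hMbound : ∀ k : ℤ, (∫ x : ℝ, (φ k x) ^ 2) ≤ M ^ 2)
    (s : ℕ)
    (hlocfin : ∀ x : ℝ, {k : ℤ | x ∈ tsupport (φ k)}.Finite)
    (hloc : ∀ x : ℝ, {k : ℤ | x ∈ tsupport (φ k)}.ncard ≤ s)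
    (f : ℝ → ℝ) (hf : MeasureTheory.MemLp f 2 MeasureTheory.volume) (j : ℤ) :
    Summable (fun k : ℤ =>
      ((2 : ℝ) ^ ((j : ℝ) / 2) * ∫ x : ℝ, f x * φ k ((2 : ℝ) ^ j * x)) ^ 2)
    ∧ (∑' k : ℤ, ((2 : ℝ) ^ ((j : ℝ) / 2) * ∫ x : ℝ, f x * φ k ((2 : ℝ) ^ j * x)) ^ 2)
        ≤ (s : ℝ) * (∫ x : ℝ, (f x) ^ 2) * M ^ 2 := by
  have h2j : (0 : ℝ) < (2 : ℝ) ^ j := zpow_pos (by norm_num) j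
  set c : ℝ := (2 : ℝ) ^ j with hc
  -- the scaled functions
  set g : ℤ → ℝ → ℝ := fun k x => φ k (c * x) with hg
  have hgcont : ∀ k, Continuous (g k) := fun k =>
    (hcont k).comp (continuous_const.mul continuous_id)
  have hgsupp : ∀ k, HasCompactSupport (g k) := by
    intro k
    have : g k = (φ k) ∘ (Homeomorph.mulLeft₀ c h2j.ne') := rfl
    rw [this]
    exact (hsupp k).comp_homeomorph _
  have hgmem : ∀ k, MemLp (g k) 2 volume := fun k =>
    (hgcont k).memLp_of_hasCompactSupport (hgsupp k)
  -- the localizing sets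
  set S : ℤ → Set ℝ := fun k => (fun x => c * x) ⁻¹' tsupport (φ k) with hS
  have hSmeas : ∀ k, MeasurableSet (S k) :=
    fun k => ((isClosed_tsupport _).preimage (continuous_const.mul continuous_id)).measurableSet
  have hfind : ∀ k, MemLp ((S k).indicator f) 2 volume := fun k => hf.indicator (hSmeas k)
  -- b k = localized square mass of f
  set b : ℤ → ℝ := fun k => ∫ x, ((S k).indicator (fun y => (f y) ^ 2)) x with hb
  have hbnonneg : ∀ k, 0 ≤ b k := fun k =>
    integral_nonneg fun x => Set.indicator_nonneg (fun y _ => sq_nonneg _) x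
  have hbint : ∀ k, Integrable ((S k).indicator (fun y => (f y) ^ 2)) volume :=
    fun k => hf.integrable_sq.indicator (hSmeas k)
  have hfsq : Integrable (fun x => (f x) ^ 2) volume := hf.integrable_sq
  -- change of variables for ∫ g²
  have hgint : ∀ k, (∫ x, (g k x) ^ 2) ≤ c⁻¹ * M ^ 2 := by
    intro k
    have := MeasureTheory.Measure.integral_comp_mul_left (fun y => (φ k y) ^ 2) c
    simp only [smul_eq_mul] at this
    rw [hg]
    simp only []
    rw [this, abs_of_nonneg (inv_nonneg.2 h2j.le)]
    exact mul_le_mul_of_nonneg_left (hMbound k) (inv_nonneg.2 h2j.le)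
  -- per-k bound : a k ≤ M² b k
  have hterm : ∀ k, ((2 : ℝ) ^ ((j : ℝ) / 2) * ∫ x : ℝ, f x * φ k ((2 : ℝ) ^ j * x)) ^ 2
      ≤ M ^ 2 * b k := by
    intro k
    have hlocal : (∫ x : ℝ, f x * φ k ((2 : ℝ) ^ j * x))
        = ∫ x, (S k).indicator f x * g k x := by
      refine integral_congr_ae (Filter.Eventually.of_forall fun x => ?_)
      by_cases hx : x ∈ S k
      · simp [Set.indicator_of_mem hx, hg, hc]
      · have : φ k ((2 : ℝ) ^ j * x) = 0 := image_eq_zero_of_notMem_tsupport hx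
        simp [Set.indicator_of_notMem hx, hg, hc, this]
    have hCS := cs_integral_sq (hfind k) (hgmem k)
    have hind : (∫ x, ((S k).indicator f x) ^ 2) = b k := by
      refine integral_congr_ae (Filter.Eventually.of_forall fun x => ?_)
      by_cases hx : x ∈ S k <;>
        simp [Set.indicator_of_mem, Set.indicator_of_notMem, hx]
    rw [hind] at hCS
    have hcsq : ((2 : ℝ) ^ ((j : ℝ) / 2)) ^ 2 = c := by
      rw [← Real.rpow_natCast ((2:ℝ) ^ ((j : ℝ)/2)) 2, ← Real.rpow_mul (by norm_num),
        hc, ← Real.rpow_intCast 2 j]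
      norm_num
    calc ((2 : ℝ) ^ ((j : ℝ) / 2) * ∫ x : ℝ, f x * φ k ((2 : ℝ) ^ j * x)) ^ 2
        = c * (∫ x, (S k).indicator f x * g k x) ^ 2 := by
          rw [mul_pow, hcsq, hlocal]
      _ ≤ c * (b k * (∫ x, (g k x) ^ 2)) := by
          exact mul_le_mul_of_nonneg_left hCS h2j.le
      _ ≤ c * (b k * (c⁻¹ * M ^ 2)) := by
          refine mul_le_mul_of_nonneg_left
            (mul_le_mul_of_nonneg_left (hgint k) (hbnonneg k)) h2j.le
      _ = M ^ 2 * b k := by field_simp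
  -- partial sums of b are bounded
  have hcount : ∀ (F : Finset ℤ) (x : ℝ),
      (∑ k ∈ F, (S k).indicator (fun y => (f y) ^ 2) x) ≤ (s : ℝ) * (f x) ^ 2 := by
    intro F x
    classical
    have hfin := hlocfin (c * x)
    have hsub : F.filter (fun k => x ∈ S k) ⊆ hfin.toFinset := by
      intro k hk
      simp only [Finset.mem_filter] at hk
      simp only [Set.Finite.mem_toFinset, Set.mem_setOf_eq]
      exact hk.2
    have hcard : (F.filter (fun k => x ∈ S k)).card ≤ s := by
      calc (F.filter (fun k => x ∈ S k)).card ≤ hfin.toFinset.card :=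
            Finset.card_le_card hsub
        _ = {k : ℤ | (c * x) ∈ tsupport (φ k)}.ncard := by
            rw [Set.ncard_eq_toFinset_card _ hfin]
        _ ≤ s := hloc (c * x)
    calc (∑ k ∈ F, (S k).indicator (fun y => (f y) ^ 2) x)
        = ∑ k ∈ F.filter (fun k => x ∈ S k), (f x) ^ 2 := by
          rw [Finset.sum_filter]
          refine Finset.sum_congr rfl fun k _ => ?_
          by_cases hx : x ∈ S k <;>
            simp [Set.indicator_of_mem, Set.indicator_of_notMem, hx]
      _ = ((F.filter (fun k => x ∈ S k)).card : ℝ) * (f x) ^ 2 := by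
          rw [Finset.sum_const, nsmul_eq_mul]
      _ ≤ (s : ℝ) * (f x) ^ 2 := by
          exact mul_le_mul_of_nonneg_right (by exact_mod_cast hcard) (sq_nonneg _)
  have hbsum : ∀ F : Finset ℤ, (∑ k ∈ F, b k) ≤ (s : ℝ) * ∫ x, (f x) ^ 2 := by
    intro F
    rw [hb]
    simp only []
    rw [← integral_finset_sum F (fun k _ => hbint k)]
    calc (∫ x, ∑ k ∈ F, (S k).indicator (fun y => (f y) ^ 2) x)
        ≤ ∫ x, (s : ℝ) * (f x) ^ 2 := by
          refine integral_mono (integrable_finset_sum F (fun k _ => hbint k))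
            (hfsq.const_mul _) fun x => hcount F x
      _ = (s : ℝ) * ∫ x, (f x) ^ 2 := integral_const_mul _ _
  have hbsummable : Summable b := summable_of_sum_le hbnonneg hbsum
  have hbtsum : (∑' k, b k) ≤ (s : ℝ) * ∫ x, (f x) ^ 2 :=
    Summable.tsum_le_of_sum_le hbsummable hbsum
  have hMsummable : Summable (fun k => M ^ 2 * b k) := hbsummable.mul_left _
  have hasummable : Summable (fun k : ℤ =>
      ((2 : ℝ) ^ ((j : ℝ) / 2) * ∫ x : ℝ, f x * φ k ((2 : ℝ) ^ j * x)) ^ 2) :=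
    Summable.of_nonneg_of_le (fun k => sq_nonneg _) hterm hMsummable
  refine ⟨hasummable, ?_⟩
  calc (∑' k : ℤ, ((2 : ℝ) ^ ((j : ℝ) / 2) * ∫ x : ℝ, f x * φ k ((2 : ℝ) ^ j * x)) ^ 2)
      ≤ ∑' k, M ^ 2 * b k := Summable.tsum_le_tsum hterm hasummable hMsummable
    _ = M ^ 2 * ∑' k, b k := tsum_mul_left
    _ ≤ M ^ 2 * ((s : ℝ) * ∫ x, (f x) ^ 2) :=
        mul_le_mul_of_nonneg_left hbtsum (sq_nonneg _)
    _ = (s : ℝ) * (∫ x : ℝ, (f x) ^ 2) * M ^ 2 := by ring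
end
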